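/- arXiv:math/0410500 — 4 statements merged into one kernel-verified Lean document; each statement's English description precedes it below -/
import Mathlib

section
/- If a sequence of homeomorphisms f_n of a compact metric space Y has the attractor-repeller property with attractor a and repeller r (i.e., f_n converges to the constant a uniformly on the complement of every open neighborhood of r), then the sequence of inverses f_n^{-1} has the attractor-repeller property with attractor r and repeller a. -/
open Filter Topology

/-- `(f n)` converges to the constant `a` uniformly outside every open neighborhood of `r`. -/
def AttractorRepeller {Y : Type*} [MetricSpace Y] (f : ℕ → Y → Y) (a r : Y) : Prop :=
  ∀ U : Set Y, IsOpen U → r ∈ U → ∀ ε : ℝ, 0 < ε →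
    ∃ N : ℕ, ∀ n ≥ N, ∀ x ∉ U, dist (f n x) a < ε

/-- If a sequence of homeomorphisms of a compact metric space has the attractor-repeller
property with attractor `a` and repeller `r`, then the inverses have it with attractor `r`
and repeller `a`. -/
theorem inverses_attractorRepeller {Y : Type*} [MetricSpace Y] [CompactSpace Y]
    (f : ℕ → Y ≃ₜ Y) (a r : Y)
    (h : AttractorRepeller (fun n x => f n x) a r) :
    AttractorRepeller (fun n x => (f n).symm x) r a := by
  intro U hU haU ε hε
  obtain ⟨δ, hδ, hball⟩ := Metric.isOpen_iff.1 hU a haU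
  obtain ⟨N, hN⟩ := h (Metric.ball r ε) Metric.isOpen_ball (Metric.mem_ball_self hε) δ hδ
  refine ⟨N, fun n hn x hx => ?_⟩
  by_contra hc
  have hy : (f n).symm x ∉ Metric.ball r ε := by
    simpa [Metric.mem_ball] using hc
  have := hN n hn _ hy
  simp only [Homeomorph.apply_symm_apply] at this
  exact hx (hball this)
end

section
/- Let Y be a compact metric space, let h_n be homeomorphisms of Y converging uniformly to a homeomorphism h, and let f_n be homeomorphisms of Y converging to the constant a uniformly outside every open neighborhood of r. Then f_n ∘ h_n converges to the constant a uniformly outside every open neighborhood of h^{-1}(r). -/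
open Filter Topology

/-- Precomposing a sequence with attractor `a` and repeller `r` by homeomorphisms
converging uniformly to `h` yields a sequence with attractor `a` and repeller `h⁻¹ r`. -/
theorem precomp_attractorRepeller {Y : Type*} [MetricSpace Y] [CompactSpace Y]
    (h : ℕ → Y ≃ₜ Y) (H : Y ≃ₜ Y) (f : ℕ → Y ≃ₜ Y) (a r : Y)
    (hh : TendstoUniformly (fun n x => h n x) H atTop)
    (hf : AttractorRepeller (fun n x => f n x) a r) :
    AttractorRepeller (fun n x => f n (h n x)) a (H.symm r) := by
  intro U hU hrU ε hε
  -- The image of the complement of `U` under `H` is compact, hence closed, and misses `r`.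
  have hKc : IsCompact (H '' Uᶜ) := (hU.isClosed_compl.isCompact).image H.continuous
  have hrK : r ∉ H '' Uᶜ := by
    rintro ⟨x, hx, hxr⟩
    apply hx
    have : x = H.symm r := by rw [← hxr, H.symm_apply_apply]
    rwa [this]
  obtain ⟨δ, hδ, hball⟩ :=
    Metric.isOpen_iff.mp hKc.isClosed.isOpen_compl r hrK
  obtain ⟨N1, hN1⟩ := hf (Metric.ball r (δ / 2)) Metric.isOpen_ball
    (Metric.mem_ball_self (by linarith)) ε hε
  obtain ⟨N2, hN2⟩ := Filter.eventually_atTop.mp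
    (Metric.tendstoUniformly_iff.mp hh (δ / 2) (by linarith))
  refine ⟨max N1 N2, fun n hn x hx => ?_⟩
  apply hN1 n (le_trans (le_max_left _ _) hn)
  intro hmem
  have h1 : dist (H x) (h n x) < δ / 2 := hN2 n (le_trans (le_max_right _ _) hn) x
  have h2 : dist (h n x) r < δ / 2 := hmem
  have h3 : dist (H x) r < δ := by
    calc dist (H x) r ≤ dist (H x) (h n x) + dist (h n x) r := dist_triangle _ _ _
      _ < δ := by linarith
  exact hball h3 ⟨x, hx, rfl⟩
end

section
/- Let (T_n) be a sequence of isometries of a proper, unbounded metric space N such that no subsequence of (T_n) converges pointwise to a map N → N. Then for every compact set C ⊆ N and every R > 0 there is an index N₀ such that for all n ≥ N₀ and all x ∈ C, dist(T_n(x), o) > R, where o is a fixed basepoint; i.e., T_n → ∞ locally uniformly on N. -/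
open Filter Topology

/-- If no subsequence of a sequence of surjective isometries of a proper, unbounded
metric space converges pointwise, then the sequence tends to infinity locally
uniformly. -/
theorem isometries_tend_to_infty {N : Type*} [MetricSpace N] [ProperSpace N]
    (hunb : ¬ Bornology.IsBounded (Set.univ : Set N)) (o : N)
    (T : ℕ → N → N) (hiso : ∀ n, Isometry (T n)) (hsurj : ∀ n, Function.Surjective (T n))
    (hdiv : ∀ φ : ℕ → ℕ, StrictMono φ → ∀ g : N → N,
      ¬ ∀ x : N, Tendsto (fun n => T (φ n) x) atTop (nhds (g x))) :
    ∀ C : Set N, IsCompact C → ∀ R : ℝ, 0 < R →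
      ∃ N₀ : ℕ, ∀ n ≥ N₀, ∀ x ∈ C, R < dist (T n x) o := by
  intro C hC R hR
  by_contra hcon
  push_neg at hcon
  -- extract a strictly monotone subsequence along which some point of C is sent near o
  have hfreq : ∃ᶠ n in atTop, ∃ x ∈ C, dist (T n x) o ≤ R := by
    rw [frequently_atTop]
    intro a
    obtain ⟨n, hn, x, hx, hd⟩ := hcon a
    exact ⟨n, hn, x, hx, hd⟩
  obtain ⟨φ₁, hφ₁, hP⟩ := extraction_of_frequently_atTop hfreq
  choose x hxC hxd using hP
  -- extract a convergent subsequence of the points x n ∈ C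
  obtain ⟨x₀, hx₀C, φ₂, hφ₂, hxlim⟩ := hC.tendsto_subseq hxC
  set φ : ℕ → ℕ := φ₁ ∘ φ₂ with hφdef
  have hφ : StrictMono φ := hφ₁.comp hφ₂
  -- C is bounded, so dist (x n) x₀ is uniformly bounded
  obtain ⟨r, hr⟩ := hC.isBounded.subset_closedBall x₀
  -- uniform bound on dist (T (φ n) x₀) o
  set R' : ℝ := R + r with hR'def
  have hbound : ∀ n, dist (T (φ n) x₀) o ≤ R' := by
    intro n
    calc dist (T (φ n) x₀) o ≤ dist (T (φ n) x₀) (T (φ n) (x (φ₂ n))) +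
          dist (T (φ n) (x (φ₂ n))) o := dist_triangle _ _ _
      _ ≤ r + R := by
          gcongr
          · rw [(hiso (φ n)).dist_eq]
            have := hr (hxC (φ₂ n))
            rw [Metric.mem_closedBall] at this
            rwa [dist_comm]
          · exact hxd (φ₂ n)
      _ = R' := by ring
  -- a dense sequence in N
  have : Nonempty N := ⟨o⟩
  obtain ⟨u, hu⟩ : ∃ u : ℕ → N, DenseRange u :=
    ⟨TopologicalSpace.denseSeq N, TopologicalSpace.denseRange_denseSeq N⟩
  -- the values T (φ n) (u i) live in compact balls
  set K : ℕ → Set N := fun i => Metric.closedBall o (R' + dist (u i) x₀) with hK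
  have hKc : IsCompact (Set.univ.pi K) :=
    isCompact_univ_pi fun i => isCompact_closedBall _ _
  have hmem : ∀ n, (fun i => T (φ n) (u i)) ∈ Set.univ.pi K := by
    intro n i _
    simp only [hK, Metric.mem_closedBall]
    calc dist (T (φ n) (u i)) o ≤ dist (T (φ n) (u i)) (T (φ n) x₀) + dist (T (φ n) x₀) o :=
        dist_triangle _ _ _
      _ ≤ dist (u i) x₀ + R' := by
          gcongr
          · rw [(hiso (φ n)).dist_eq]
          · exact hbound n
      _ = R' + dist (u i) x₀ := by ring
  -- extract a subsequence converging pointwise on the dense sequence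
  obtain ⟨L, -, φ₃, hφ₃, hL⟩ := hKc.tendsto_subseq hmem
  set σ : ℕ → ℕ := φ ∘ φ₃ with hσdef
  have hσ : StrictMono σ := hφ.comp hφ₃
  have hLi : ∀ i, Tendsto (fun n => T (σ n) (u i)) atTop (𝓝 (L i)) := by
    intro i
    have := (tendsto_pi_nhds.mp hL) i
    exact this
  -- every orbit along σ is Cauchy
  have hcauchy : ∀ y : N, CauchySeq (fun n => T (σ n) y) := by
    intro y
    rw [Metric.cauchySeq_iff]
    intro ε hε
    obtain ⟨i, hi⟩ := hu.exists_dist_lt y (by linarith : (0:ℝ) < ε / 4)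
    have hCi : CauchySeq (fun n => T (σ n) (u i)) := (hLi i).cauchySeq
    rw [Metric.cauchySeq_iff] at hCi
    obtain ⟨M, hM⟩ := hCi (ε / 4) (by linarith)
    refine ⟨M, fun m hm n hn => ?_⟩
    calc dist (T (σ m) y) (T (σ n) y)
        ≤ dist (T (σ m) y) (T (σ m) (u i)) + dist (T (σ m) (u i)) (T (σ n) (u i)) +
          dist (T (σ n) (u i)) (T (σ n) y) := dist_triangle4 _ _ _ _
      _ < ε / 4 + ε / 4 + ε / 4 := by
          gcongr
          · rw [(hiso (σ m)).dist_eq]; exact hi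
          · exact hM m hm n hn
          · rw [(hiso (σ n)).dist_eq, dist_comm]; exact hi
      _ < ε := by linarith
  -- hence every orbit converges; define the limit map g
  have hconv : ∀ y : N, ∃ z : N, Tendsto (fun n => T (σ n) y) atTop (𝓝 z) := fun y =>
    cauchySeq_tendsto_of_complete (hcauchy y)
  choose g hg using hconv
  exact hdiv σ hσ g hg
end

section
/- Let X be a compact metric space and (f_n) a sequence of η-quasisymmetric homeomorphisms of X (with common control function η) such that there exist three points x₀, x₁ and a constant c > 0 with f_n(x₀) = x₀ for all n and dist(f_n(x₁), x₀) = c for all n. Then (f_n) has a subsequence converging uniformly on X, and the limit is either constant or an η-quasisymmetric embedding; moreover since dist(limit(x₁), x₀) = c > 0, the limit is non-constant, hence an embedding. -/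
open Filter Topology

/-- `f` is `η`-quasisymmetric. -/
def QS {X : Type*} [MetricSpace X] (η : ℝ → ℝ) (f : X → X) : Prop :=
  ∀ a b x : X, ∀ t : ℝ, 0 ≤ t → dist x a ≤ t * dist x b →
    dist (f x) (f a) ≤ η t * dist (f x) (f b)

/-- A sequence of `η`-quasisymmetric homeomorphisms of a compact metric space fixing a
point `x₀` and keeping `x₁` at constant positive distance `c` from `x₀` has a
subsequence converging uniformly to an `η`-quasisymmetric embedding. -/
theorem quasisymmetric_normal_family {X : Type*} [MetricSpace X] [CompactSpace X]
    (η : ℝ → ℝ) (hη0 : η 0 = 0) (hmono : StrictMonoOn η (Set.Ici (0 : ℝ)))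
    (hcont : ContinuousOn η (Set.Ici (0 : ℝ)))
    (hηpos : ∀ t : ℝ, 0 ≤ t → 0 ≤ η t)
    (f : ℕ → X ≃ₜ X) (hf : ∀ n, QS η (f n))
    (x₀ x₁ : X) (c : ℝ) (hc : 0 < c)
    (hfix : ∀ n, f n x₀ = x₀) (hdist : ∀ n, dist (f n x₁) x₀ = c) :
    ∃ φ : ℕ → ℕ, StrictMono φ ∧ ∃ g : X → X,
      TendstoUniformly (fun n x => f (φ n) x) g atTop ∧ QS η g ∧
        Topology.IsEmbedding g := by
  -- basic constants
  have hx10 : x₁ ≠ x₀ := by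
    intro h
    have := hdist 0
    rw [h, hfix 0, dist_self] at this
    exact hc.ne this
  set d : ℝ := dist x₁ x₀ with hd_def
  have hd : 0 < d := dist_pos.2 hx10
  set D : ℝ := Metric.diam (Set.univ : Set X) with hD_def
  have hD0 : 0 ≤ D := Metric.diam_nonneg
  have hdiam : ∀ x y : X, dist x y ≤ D := fun x y =>
    Metric.dist_le_diam_of_mem isCompact_univ.isBounded (Set.mem_univ _) (Set.mem_univ _)
  -- the uniform modulus of continuity
  set b : ℝ → ℝ := fun s => η (2 * |s| / d) * D with hb_def
  have hb_lim : Filter.Tendsto b (nhds 0) (nhds 0) := by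
    have h1 : Filter.Tendsto (fun s : ℝ => 2 * |s| / d) (nhds 0) (nhds (0 : ℝ)) := by
      have : Continuous fun s : ℝ => 2 * |s| / d :=
        (continuous_const.mul continuous_abs).div_const d
      simpa using this.tendsto 0
    have h2 : Filter.Tendsto (fun s : ℝ => 2 * |s| / d) (nhds 0) (nhdsWithin 0 (Set.Ici 0)) := by
      refine tendsto_nhdsWithin_of_tendsto_nhds_of_eventually_within _ h1 ?_
      filter_upwards with s
      exact div_nonneg (by positivity) hd.le
    have h3 : Filter.Tendsto η (nhdsWithin 0 (Set.Ici 0)) (nhds 0) := by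
      have := (hcont 0 Set.self_mem_Ici)
      rwa [ContinuousWithinAt, hη0] at this
    have := (h3.comp h2).mul_const D
    simpa using this
  -- key uniform estimate
  have hkey : ∀ (n : ℕ) (x y : X), dist (f n x) (f n y) ≤ b (dist x y) := by
    intro n x y
    -- choose a base point far from x
    have hfar : dist x x₀ ≥ d / 2 ∨ dist x x₁ ≥ d / 2 := by
      by_contra h
      push_neg at h
      have htri : d ≤ dist x₁ x + dist x x₀ := dist_triangle x₁ x x₀
      rw [dist_comm x₁ x] at htri
      linarith [h.1, h.2]
    obtain ⟨z, hz⟩ : ∃ z : X, dist x z ≥ d / 2 := by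
      rcases hfar with h | h
      · exact ⟨x₀, h⟩
      · exact ⟨x₁, h⟩
    set t : ℝ := 2 * dist x y / d with ht_def
    have ht0 : 0 ≤ t := by positivity
    have hle : dist x y ≤ t * dist x z := by
      rw [ht_def, div_mul_eq_mul_div, le_div_iff₀ hd]
      nlinarith [dist_nonneg (x := x) (y := y), hz, hd]
    have := hf n y z x t ht0 hle
    have h2 : η t * dist (f n x) (f n z) ≤ η t * D :=
      mul_le_mul_of_nonneg_left (hdiam _ _) (hηpos t ht0)
    have habs : b (dist x y) = η t * D := by
      rw [hb_def]
      simp only [abs_of_nonneg dist_nonneg]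
      rfl
    rw [habs]
    exact this.trans h2
  -- the set of functions with modulus b is compact in C(X,X)
  set S : Set C(X, X) := {g : C(X, X) | ∀ x y : X, dist (g x) (g y) ≤ b (dist x y)} with hS_def
  have hScont : ∀ g : X → X, (∀ x y : X, dist (g x) (g y) ≤ b (dist x y)) → Continuous g := by
    intro g hg
    exact (Metric.equicontinuous_of_continuity_modulus b hb_lim (fun _ : Unit => g)
      (fun x y _ => hg x y)).continuous ()
  have hT : ContinuousMap.toFun '' S =
      {g : X → X | ∀ x y : X, dist (g x) (g y) ≤ b (dist x y)} := by
    ext g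
    constructor
    · rintro ⟨G, hG, rfl⟩
      exact hG
    · intro hg
      exact ⟨⟨g, hScont g hg⟩, hg, rfl⟩
  have hTclosed : IsClosed {g : X → X | ∀ x y : X, dist (g x) (g y) ≤ b (dist x y)} := by
    have : {g : X → X | ∀ x y : X, dist (g x) (g y) ≤ b (dist x y)} =
        ⋂ (x : X) (y : X), {g : X → X | dist (g x) (g y) ≤ b (dist x y)} := by
      ext g; simp [Set.mem_iInter]
    rw [this]
    refine isClosed_iInter fun x => isClosed_iInter fun y => ?_
    exact isClosed_le ((continuous_apply x).dist (continuous_apply y)) continuous_const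
  have hScompact : IsCompact S := by
    apply ArzelaAscoli.isCompact_of_equicontinuous
    · rw [hT]
      exact hTclosed.isCompact
    · exact Metric.equicontinuous_of_continuity_modulus b hb_lim _
        (fun x y (g : S) => g.2 x y)
  -- the sequence in S
  set F : ℕ → C(X, X) := fun n => ⟨f n, (f n).continuous⟩ with hF_def
  have hFS : ∀ n, F n ∈ S := fun n x y => hkey n x y
  obtain ⟨G, hGS, φ, hφ, hconv⟩ := hScompact.tendsto_subseq hFS
  refine ⟨φ, hφ, G, ?_, ?_, ?_⟩
  · -- uniform convergence
    have := ContinuousMap.tendsto_iff_tendstoUniformly.1 hconv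
    exact this
  · -- QS of the limit
    intro a bb x t ht hle
    have htu : TendstoUniformly (fun n x => f (φ n) x) G atTop :=
      ContinuousMap.tendsto_iff_tendstoUniformly.1 hconv
    have hpt : ∀ z : X, Filter.Tendsto (fun n => f (φ n) z) atTop (nhds (G z)) := fun z =>
      htu.tendsto_at z
    refine le_of_tendsto_of_tendsto ((hpt x).dist (hpt a))
      (((hpt x).dist (hpt bb)).const_mul (η t)) ?_
    filter_upwards with n
    exact hf (φ n) a bb x t ht hle
  · -- embedding
    have htu : TendstoUniformly (fun n x => f (φ n) x) G atTop :=
      ContinuousMap.tendsto_iff_tendstoUniformly.1 hconv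
    have hpt : ∀ z : X, Filter.Tendsto (fun n => f (φ n) z) atTop (nhds (G z)) := fun z =>
      htu.tendsto_at z
    have hQS : QS η G := by
      intro a bb x t ht hle
      refine le_of_tendsto_of_tendsto ((hpt x).dist (hpt a))
        (((hpt x).dist (hpt bb)).const_mul (η t)) ?_
      filter_upwards with n
      exact hf (φ n) a bb x t ht hle
    have hG0 : G x₀ = x₀ := by
      have h1 : Filter.Tendsto (fun n => f (φ n) x₀) atTop (nhds x₀) := by
        simp only [hfix]
        exact tendsto_const_nhds
      exact tendsto_nhds_unique (hpt x₀) h1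
    have hG1 : dist (G x₁) x₀ = c := by
      have h1 : Filter.Tendsto (fun n => dist (f (φ n) x₁) x₀) atTop (nhds (dist (G x₁) x₀)) :=
        (hpt x₁).dist tendsto_const_nhds
      have h2 : Filter.Tendsto (fun n => dist (f (φ n) x₁) x₀) atTop (nhds c) := by
        simp only [hdist]
        exact tendsto_const_nhds
      exact tendsto_nhds_unique h1 h2
    have hinj : Function.Injective G := by
      intro a bb hab
      by_contra hne
      have hdab : 0 < dist a bb := dist_pos.2 hne
      have hconstant : ∀ y : X, G y = G a := by
        intro y
        have ht0 : 0 ≤ dist a y / dist a bb := div_nonneg dist_nonneg hdab.le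
        have hle : dist a y ≤ (dist a y / dist a bb) * dist a bb := by
          rw [div_mul_cancel₀ _ hdab.ne']
        have := hQS y bb a _ ht0 hle
        rw [show dist (G a) (G bb) = 0 from by rw [hab, dist_self], mul_zero] at this
        exact (dist_eq_zero.1 (le_antisymm this dist_nonneg)).symm
      have h0 : G a = x₀ := (hconstant x₀).symm.trans hG0
      rw [hconstant x₁, h0, dist_self] at hG1
      exact hc.ne hG1
    exact (G.continuous.isClosedEmbedding hinj).isEmbedding
end
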